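/- Let K be a field extension of an infinite field k, and let K(t) be the field of rational functions with the k*-action (a·f)(t) := f(a^{−1}t). A valuation w on K(t) (trivial on k*) is k*-invariant if and only if for every Laurent polynomial f = Σ_{λ∈ℤ} f_λ t^λ with f_λ ∈ K one has w(f) = min_{λ∈ℤ} ( r(w)(f_λ) + λ w(t) ), where r(w) denotes the restriction of w to K. -/

import Mathlib

open Polynomial

/-- A (rank-one, real-valued) valuation on a field `L`, trivial on the subfield `k`:
a map `L → ℝ ∪ {+∞}` which is multiplicative, satisfies the ultrametric inequality,
takes the value `+∞` exactly at `0`, and vanishes on nonzero constants from `k`. -/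
def IsValuationTrivOn (k L : Type*) [Field k] [Field L] [Algebra k L]
    (w : L → WithTop ℝ) : Prop :=
  (∀ f g : L, w (f * g) = w f + w g) ∧
  (∀ f g : L, min (w f) (w g) ≤ w (f + g)) ∧
  (∀ f : L, w f = ⊤ ↔ f = 0) ∧
  (∀ c : k, c ≠ 0 → w (algebraMap k L c) = 0)

/-- The Laurent polynomial `Σ_λ f_λ t^λ` with coefficients `f : ℤ →₀ K`, as an element
of the rational function field `K(t)`. -/
noncomputable def laurentEval {K : Type*} [Field K] (f : ℤ →₀ K) : RatFunc K :=
  f.sum fun lam c => RatFunc.C c * RatFunc.X ^ lam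

/-- The action of `a ∈ k*` on Laurent polynomials: `(a·f)(t) = f(a⁻¹ t)`, i.e.
`a · (Σ f_λ t^λ) = Σ a^{−λ} f_λ t^λ`. -/
noncomputable def laurentAct {k K : Type*} [Field k] [Field K] [Algebra k K]
    (a : k) (f : ℤ →₀ K) : ℤ →₀ K :=
  f.sum fun lam c => Finsupp.single lam ((algebraMap k K a) ^ (-lam) * c)


section Aux
variable {k K : Type*} [Field k] [Field K] [Algebra k K]

lemma algebraMap_ratFunc_eq (a : k) :
    algebraMap k (RatFunc K) a = RatFunc.C (algebraMap k K a) := by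
  rw [IsScalarTower.algebraMap_apply k K[X] (RatFunc K),
    IsScalarTower.algebraMap_apply k K K[X], Polynomial.algebraMap_eq,
    RatFunc.algebraMap_C]

variable (w : RatFunc K → WithTop ℝ) (hw : IsValuationTrivOn k (RatFunc K) w)
include hw

lemma wv_ne_top {x : RatFunc K} (hx : x ≠ 0) : w x ≠ ⊤ := fun h => hx ((hw.2.2.1 x).mp h)

lemma wv_zero : w (0 : RatFunc K) = ⊤ := (hw.2.2.1 0).mpr rfl

lemma wv_one : w (1 : RatFunc K) = 0 := by
  have h := hw.1 1 1
  rw [mul_one] at h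
  obtain ⟨r, hr⟩ := WithTop.ne_top_iff_exists.mp (wv_ne_top w hw one_ne_zero)
  rw [← hr] at h ⊢
  norm_cast at h ⊢
  linarith

lemma wv_pow {x : RatFunc K} (r : ℝ) (hr : w x = (r : WithTop ℝ)) (n : ℕ) :
    w (x ^ n) = (((n : ℝ) * r : ℝ) : WithTop ℝ) := by
  induction n with
  | zero => simpa using wv_one w hw
  | succ m ih =>
      rw [pow_succ, hw.1, ih, hr, ← WithTop.coe_add]
      norm_cast
      push_cast
      ring

lemma wv_inv {x : RatFunc K} (hx : x ≠ 0) (r : ℝ) (hr : w x = (r : WithTop ℝ)) :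
    w x⁻¹ = ((-r : ℝ) : WithTop ℝ) := by
  have h := hw.1 x x⁻¹
  rw [mul_inv_cancel₀ hx, wv_one w hw, hr] at h
  obtain ⟨s, hs⟩ := WithTop.ne_top_iff_exists.mp (wv_ne_top w hw (inv_ne_zero hx))
  rw [← hs] at h ⊢
  norm_cast at h ⊢
  linarith

lemma wv_zpow {x : RatFunc K} (hx : x ≠ 0) (r : ℝ) (hr : w x = (r : WithTop ℝ)) (n : ℤ) :
    w (x ^ n) = (((n : ℝ) * r : ℝ) : WithTop ℝ) := by
  obtain ⟨m, rfl | rfl⟩ := n.eq_nat_or_neg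
  · rw [zpow_natCast, wv_pow w hw r hr m]
    norm_num
  · rw [zpow_neg, zpow_natCast,
      wv_inv w hw (pow_ne_zero m hx) ((m : ℝ) * r) (wv_pow w hw r hr m)]
    norm_cast
    push_cast
    ring

lemma wv_sum {ι : Type*} (S : Finset ι) (v : ι → RatFunc K) :
    (S.inf fun i => w (v i)) ≤ w (∑ i ∈ S, v i) := by
  induction S using Finset.cons_induction with
  | empty => simp [wv_zero w hw]
  | cons a S ha ih =>
      rw [Finset.sum_cons, Finset.inf_cons]
      exact le_trans (min_le_min le_rfl ih) (hw.2.1 _ _)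

end Aux


section Aux2
variable {k K : Type*} [Field k] [Field K] [Algebra k K]

lemma algebraMap_ratFunc_eq' (a : k) :
    algebraMap k (RatFunc K) a = RatFunc.C (algebraMap k K a) := by
  rw [IsScalarTower.algebraMap_apply k K[X] (RatFunc K),
    IsScalarTower.algebraMap_apply k K K[X], Polynomial.algebraMap_eq,
    RatFunc.algebraMap_C]

lemma laurentEval_eq_sum (f : ℤ →₀ K) :
    laurentEval f = ∑ lam ∈ f.support, RatFunc.C (f lam) * RatFunc.X ^ lam := rfl

lemma laurentEval_laurentAct (a : k) (f : ℤ →₀ K) :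
    laurentEval (laurentAct a f) =
      ∑ lam ∈ f.support,
        (algebraMap k (RatFunc K) a) ^ (-lam) * (RatFunc.C (f lam) * RatFunc.X ^ lam) := by
  unfold laurentEval laurentAct
  rw [Finsupp.sum_sum_index (fun i => by simp) (fun i b₁ b₂ => by rw [map_add, add_mul])]
  apply Finset.sum_congr rfl
  intro lam _
  dsimp only
  rw [Finsupp.sum_single_index (by simp)]
  rw [map_mul, map_zpow₀, ← algebraMap_ratFunc_eq']
  ring

lemma laurentAct_apply (a : k) (f : ℤ →₀ K) (lam : ℤ) :
    laurentAct a f lam = (algebraMap k K a) ^ (-lam) * f lam := by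
  unfold laurentAct
  rw [Finsupp.sum_apply, Finsupp.sum_eq_single lam]
  · rw [Finsupp.single_eq_same]
  · intro b _ hb
    rw [Finsupp.single_eq_of_ne' hb]
  · simp

lemma laurentAct_support {a : k} (ha : a ≠ 0) (f : ℤ →₀ K) :
    (laurentAct a f).support = f.support := by
  have ha' : algebraMap k K a ≠ 0 := by
    simpa using ha
  ext lam
  simp [Finsupp.mem_support_iff, laurentAct_apply, zpow_ne_zero, ha']

lemma reindex_sum {K : Type*} [Field K] (f : ℤ →₀ K) (hf : f.support.Nonempty)
    (G : ℤ → RatFunc K) (hG : ∀ lam, f lam = 0 → G lam = 0) :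
    ∑ lam ∈ f.support, G lam
      = ∑ j : Fin ((f.support.max' hf - f.support.min' hf).toNat + 1),
          G (f.support.min' hf + (j.val : ℤ)) := by
  set n₀ := f.support.min' hf with hn₀
  set N := (f.support.max' hf - n₀).toNat + 1 with hN
  have hinj : Function.Injective (fun j : Fin N => n₀ + (j.val : ℤ)) := by
    intro i j hij
    simp only [add_right_inj, Nat.cast_inj] at hij
    exact Fin.ext hij
  rw [← Finset.sum_image (g := fun j : Fin N => n₀ + (j.val : ℤ)) (f := G)
    (fun x _ y _ h => hinj h)]
  apply Finset.sum_subset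
  · intro lam hlam
    have h1 : n₀ ≤ lam := f.support.min'_le lam hlam
    have h2 : lam ≤ f.support.max' hf := f.support.le_max' lam hlam
    have hlt : (lam - n₀).toNat < N := by
      rw [hN]
      have : (lam - n₀).toNat ≤ (f.support.max' hf - n₀).toNat :=
        Int.toNat_le_toNat (by omega)
      omega
    refine Finset.mem_image.mpr ⟨⟨(lam - n₀).toNat, hlt⟩, Finset.mem_univ _, ?_⟩
    simp only
    rw [Int.toNat_of_nonneg (by omega)]
    ring_nf
  · intro lam _ hlam
    exact hG lam (Finsupp.notMem_support_iff.mp hlam)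

end Aux2

section Main
variable {k K : Type*} [Field k] [Field K] [Algebra k K]

lemma wv_le [Infinite k]
    (w : RatFunc K → WithTop ℝ) (hw : IsValuationTrivOn k (RatFunc K) w)
    (hinv : ∀ (a : k), a ≠ 0 → ∀ f : ℤ →₀ K,
        w (laurentEval (laurentAct a f)) = w (laurentEval f))
    (f : ℤ →₀ K) (hf : f.support.Nonempty) {lam : ℤ} (hlam : lam ∈ f.support) :
    w (laurentEval f) ≤ w (RatFunc.C (f lam) * RatFunc.X ^ lam) := by
  classical
  set n₀ := f.support.min' hf with hn₀
  set N := (f.support.max' hf - n₀).toNat + 1 with hNdef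
  set s : Fin N → RatFunc K :=
    fun j => RatFunc.C (f (n₀ + (j.val : ℤ))) * RatFunc.X ^ (n₀ + (j.val : ℤ)) with hs
  have e := Set.Infinite.natEmbedding _ ((Set.finite_singleton (0:k)).infinite_compl)
  set a : Fin N → k := fun μ => (e μ.val).val with ha
  have ha0 : ∀ μ, a μ ≠ 0 := fun μ => (e μ.val).2
  have hainj : Function.Injective a := by
    intro i j h
    exact Fin.ext (e.injective (Subtype.ext h))
  set c : Fin N → k := fun μ => (a μ)⁻¹ with hc
  have hcinj : Function.Injective c := fun i j h => hainj (inv_injective h)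
  set V := Matrix.vandermonde c with hV
  have hdet : V.det ≠ 0 := by
    rw [hV, Matrix.det_vandermonde]
    apply Finset.prod_ne_zero_iff.mpr
    intro i _
    apply Finset.prod_ne_zero_iff.mpr
    intro j hj
    have hij : i ≠ j := (Finset.mem_Ioi.mp hj).ne
    exact sub_ne_zero.mpr fun h => hij (hcinj h.symm)
  set φ := algebraMap k (RatFunc K) with hφ
  have hφ0 : ∀ μ, φ (a μ) ≠ 0 := fun μ => by simpa using ha0 μ
  have hWV : V⁻¹ * V = 1 := Matrix.nonsing_inv_mul V (isUnit_iff_ne_zero.mpr hdet)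
  have hmap : (V⁻¹.map φ) * (V.map φ) = 1 := by
    rw [← Matrix.map_mul, hWV]
    exact Matrix.map_one _ (map_zero φ) (map_one φ)
  have hA : ∀ μ : Fin N, laurentEval (laurentAct (a μ) f)
      = ∑ j : Fin N, φ (a μ) ^ (-(n₀ + (j.val : ℤ))) * s j := by
    intro μ
    rw [laurentEval_laurentAct]
    rw [reindex_sum f hf _ (fun l hl => by simp [hl])]
  have hmv : ∀ μ : Fin N, ∑ j : Fin N, φ (V μ j) * s j
      = φ (a μ) ^ (n₀ : ℤ) * laurentEval (laurentAct (a μ) f) := by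
    intro μ
    rw [hA μ, Finset.mul_sum]
    apply Finset.sum_congr rfl
    intro j _
    have h1 : φ (V μ j) = φ (a μ) ^ (-(j.val : ℤ)) := by
      show φ (c μ ^ j.val) = _
      rw [map_pow, hc]
      simp only [map_inv₀]
      rw [inv_pow, ← zpow_natCast (φ (a μ)), ← zpow_neg]
    calc φ (V μ j) * s j = φ (a μ) ^ (-(j.val : ℤ)) * s j := by rw [h1]
      _ = φ (a μ) ^ ((n₀ : ℤ) + (-(n₀ + (j.val : ℤ)))) * s j := by congr 1; ring_nf
      _ = φ (a μ) ^ (n₀ : ℤ) * (φ (a μ) ^ (-(n₀ + (j.val : ℤ))) * s j) := by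
          rw [zpow_add₀ (hφ0 μ), mul_assoc]
  set u : Fin N → RatFunc K :=
    fun μ => φ (a μ) ^ (n₀ : ℤ) * laurentEval (laurentAct (a μ) f) with hu
  have hmv' : (V.map φ).mulVec s = u := by
    funext μ
    simp only [Matrix.mulVec, dotProduct, Matrix.map_apply]
    exact hmv μ
  have hsolve : s = (V⁻¹.map φ).mulVec u := by
    rw [← hmv', Matrix.mulVec_mulVec, hmap, Matrix.one_mulVec]
  have hkey : ∀ j : Fin N, w (laurentEval f) ≤ w (s j) := by
    intro j
    have hsj : s j = ∑ μ : Fin N, (V⁻¹.map φ) j μ * u μ := by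
      conv_lhs => rw [hsolve]
      simp [Matrix.mulVec, dotProduct]
    rw [hsj]
    refine le_trans (Finset.le_inf ?_) (wv_sum w hw _ _)
    intro μ _
    by_cases h0 : V⁻¹ j μ = 0
    · have hz : (V⁻¹.map φ) j μ * u μ = 0 := by simp [Matrix.map_apply, h0]
      rw [hz, wv_zero w hw]
      exact le_top
    · have hwu : w (u μ) = w (laurentEval f) := by
        rw [hu]
        dsimp only
        rw [hw.1, wv_zpow w hw (hφ0 μ) 0
          (by exact_mod_cast hw.2.2.2 (a μ) (ha0 μ)), hinv (a μ) (ha0 μ) f]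
        norm_num
      have hwc : w ((V⁻¹.map φ) j μ) = 0 := by
        simp only [Matrix.map_apply]
        exact hw.2.2.2 _ h0
      rw [hw.1, hwc, hwu, zero_add]
  have h1 : n₀ ≤ lam := f.support.min'_le lam hlam
  have hlt : (lam - n₀).toNat < N := by
    have h2 := f.support.le_max' lam hlam
    have h3 := Int.toNat_le_toNat (sub_le_sub_right h2 n₀)
    omega
  have hk := hkey ⟨(lam - n₀).toNat, hlt⟩
  have heq : n₀ + (((lam - n₀).toNat : ℤ)) = lam := by
    rw [Int.toNat_of_nonneg (by omega)]
    ring_nf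
  have h5 : s ⟨(lam - n₀).toNat, hlt⟩ = RatFunc.C (f lam) * RatFunc.X ^ lam := by
    show RatFunc.C (f (n₀ + ((lam - n₀).toNat : ℤ))) * RatFunc.X ^ (n₀ + ((lam - n₀).toNat : ℤ))
      = _
    rw [heq]
  rwa [h5] at hk

end Main

section Main2
variable {k K : Type*} [Field k] [Field K] [Algebra k K]

lemma wv_term (w : RatFunc K → WithTop ℝ) (hw : IsValuationTrivOn k (RatFunc K) w)
    (f : ℤ →₀ K) (lam : ℤ) :
    w (RatFunc.C (f lam)) + ((lam : ℝ) : WithTop ℝ) * w RatFunc.X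
      = w (RatFunc.C (f lam) * RatFunc.X ^ lam) := by
  obtain ⟨r, hr⟩ := WithTop.ne_top_iff_exists.mp (wv_ne_top w hw RatFunc.X_ne_zero)
  rw [hw.1, wv_zpow w hw RatFunc.X_ne_zero r hr.symm lam, ← hr]
  norm_cast

end Main2

/-- Let `K` be a field extension of an infinite field `k`, and `K(t)`
the rational function field with the `k*`-action `(a·f)(t) = f(a⁻¹t)`.  A valuation `w`
on `K(t)` (trivial on `k*`) is `k*`-invariant iff for every Laurent polynomial
`f = Σ_λ f_λ t^λ` one has `w(f) = min_λ ( r(w)(f_λ) + λ·w(t) )`, where `r(w)` is the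
restriction of `w` to `K` (here the minimum is realized as the infimum over the finite
support of `f`, the omitted terms being `+∞`). -/

theorem kstar_invariant_valuation_iff_min_formula
    {k K : Type*} [Field k] [Infinite k] [Field K] [Algebra k K]
    (w : RatFunc K → WithTop ℝ)
    (hw : IsValuationTrivOn k (RatFunc K) w) :
    (∀ (a : k), a ≠ 0 → ∀ f : ℤ →₀ K, w (laurentEval (laurentAct a f)) = w (laurentEval f)) ↔
    (∀ f : ℤ →₀ K,
      w (laurentEval f) =
        f.support.inf fun lam =>
          w (RatFunc.C (f lam)) + ((lam : ℝ) : WithTop ℝ) * w RatFunc.X) := by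
  constructor
  · intro hinv f
    by_cases hf : f.support.Nonempty
    · apply le_antisymm
      · apply Finset.le_inf
        intro lam hlam
        rw [wv_term w hw f lam]
        exact wv_le w hw hinv f hf hlam
      · calc (f.support.inf fun lam =>
              w (RatFunc.C (f lam)) + ((lam : ℝ) : WithTop ℝ) * w RatFunc.X)
            = f.support.inf fun lam => w (RatFunc.C (f lam) * RatFunc.X ^ lam) :=
              Finset.inf_congr rfl fun lam hlam => wv_term w hw f lam
          _ ≤ w (laurentEval f) := by
              rw [laurentEval_eq_sum]
              exact wv_sum w hw f.support _
    · rw [Finset.not_nonempty_iff_eq_empty] at hf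
      obtain rfl : f = 0 := Finsupp.support_eq_empty.mp hf
      rw [hf, Finset.inf_empty]
      rw [show laurentEval (0 : ℤ →₀ K) = 0 from Finsupp.sum_zero_index, wv_zero w hw]
  · intro hmin a ha f
    rw [hmin (laurentAct a f), hmin f]
    apply Finset.inf_congr (laurentAct_support ha f)
    intro lam hlam
    have hφa : algebraMap k (RatFunc K) a ≠ 0 := by simpa using ha
    have hC : w (RatFunc.C ((laurentAct a f) lam)) = w (RatFunc.C (f lam)) := by
      rw [laurentAct_apply, map_mul, hw.1, map_zpow₀, ← algebraMap_ratFunc_eq',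
        wv_zpow w hw hφa 0 (by exact_mod_cast hw.2.2.2 a ha)]
      norm_num
    rw [hC]
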